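/- For nonnegative integers k ≤ n, the q-binomial coefficient factorizes as [n choose k]_q = ∏_d Φ_d(q), where the product ranges over all positive integers d ≤ n such that ⌊k/d⌋ + ⌊(n-k)/d⌋ < ⌊n/d⌋, and Φ_d denotes the d-th cyclotomic polynomial. -/
import Mathlib

open Polynomial

/-- The `q`-integer `[n]_q = 1 + q + ⋯ + q^{n-1}` as a polynomial in `ℤ[q]`. -/
noncomputable def qInt (n : ℕ) : Polynomial ℤ := ∑ i ∈ Finset.range n, X ^ i

/-- The `q`-factorial `[n]_q! = ∏_{k=1}^n [k]_q`. -/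
noncomputable def qFact (n : ℕ) : Polynomial ℤ := ∏ k ∈ Finset.range n, qInt (k + 1)

lemma qInt_ne_zero {m : ℕ} (hm : 0 < m) : qInt m ≠ 0 := by
  intro h
  have : (qInt m).eval 1 = (m : ℤ) := by
    simp [qInt, eval_finset_sum]
  rw [h] at this
  simp at this
  omega

lemma qFact_ne_zero (n : ℕ) : qFact n ≠ 0 :=
  Finset.prod_ne_zero_iff.2 fun k _ => qInt_ne_zero k.succ_pos

lemma qInt_eq_prod (m : ℕ) (hm : 0 < m) :
    qInt m = ∏ d ∈ (Nat.divisors m).erase 1, cyclotomic d ℤ := by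
  have h1 : (1 : ℕ) ∈ Nat.divisors m := Nat.one_mem_divisors.2 hm.ne'
  have hx : (X - 1 : Polynomial ℤ) * qInt m = X ^ m - 1 := by
    rw [mul_comm]; exact geom_sum_mul X m
  have h2 : ∏ d ∈ Nat.divisors m, cyclotomic d ℤ = X ^ m - 1 :=
    prod_cyclotomic_eq_X_pow_sub_one hm ℤ
  have h3 : (X - 1 : Polynomial ℤ) * ∏ d ∈ (Nat.divisors m).erase 1, cyclotomic d ℤ
      = X ^ m - 1 := by
    rw [← cyclotomic_one ℤ, ← Finset.mul_prod_erase _ _ h1] at *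
    exact h2
  have hX1 : (X - 1 : Polynomial ℤ) ≠ 0 := X_sub_C_ne_zero 1
  exact mul_left_cancel₀ hX1 (hx.trans h3.symm)

lemma divisors_erase_eq (m n : ℕ) (hm : 0 < m) (hmn : m ≤ n) :
    (Nat.divisors m).erase 1 = (Finset.Ioc 1 n).filter (· ∣ m) := by
  ext d
  simp only [Finset.mem_erase, Nat.mem_divisors, Finset.mem_filter, Finset.mem_Ioc]
  constructor
  · rintro ⟨h1, hd, -⟩
    have hle := Nat.le_of_dvd hm hd
    have : d ≠ 0 := by rintro rfl; simp at hd; omega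
    exact ⟨⟨by omega, hle.trans hmn⟩, hd⟩
  · rintro ⟨⟨h1, -⟩, hd⟩
    exact ⟨by omega, hd, hm.ne'⟩

lemma qFact_eq_prod (n : ℕ) :
    qFact n = ∏ d ∈ Finset.Ioc 1 n, cyclotomic d ℤ ^ (n / d) := by
  have h1 : qFact n = ∏ m ∈ Finset.Ioc 0 n, qInt m := by
    rw [qFact]
    apply Finset.prod_bij' (fun k _ => k + 1) (fun m _ => m - 1) <;> intros <;>
      simp_all [Finset.mem_Ioc, Finset.mem_range] <;> omega
  rw [h1]
  calc ∏ m ∈ Finset.Ioc 0 n, qInt m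
      = ∏ m ∈ Finset.Ioc 0 n, ∏ d ∈ (Finset.Ioc 1 n).filter (· ∣ m), cyclotomic d ℤ := by
        apply Finset.prod_congr rfl
        intro m hm
        simp only [Finset.mem_Ioc] at hm
        rw [qInt_eq_prod m hm.1, divisors_erase_eq m n hm.1 hm.2]
    _ = ∏ m ∈ Finset.Ioc 0 n, ∏ d ∈ Finset.Ioc 1 n,
          if d ∣ m then cyclotomic d ℤ else 1 := by
        simp [Finset.prod_filter]
    _ = ∏ d ∈ Finset.Ioc 1 n, ∏ m ∈ Finset.Ioc 0 n,
          if d ∣ m then cyclotomic d ℤ else 1 := Finset.prod_comm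
    _ = ∏ d ∈ Finset.Ioc 1 n, cyclotomic d ℤ ^ (n / d) := by
        apply Finset.prod_congr rfl
        intro d _
        rw [← Finset.prod_filter, Finset.prod_const, Nat.Ioc_filter_dvd_card_eq_div]

lemma qFact_eq_prod_ext {m n : ℕ} (hmn : m ≤ n) :
    qFact m = ∏ d ∈ Finset.Ioc 1 n, cyclotomic d ℤ ^ (m / d) := by
  rw [qFact_eq_prod]
  apply Finset.prod_subset (Finset.Ioc_subset_Ioc_right hmn)
  intro d hd hd'
  simp only [Finset.mem_Ioc] at hd hd'
  have : m / d = 0 := Nat.div_eq_of_lt (by omega)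
  simp [this]

lemma div_key {n k d : ℕ} (hk : k ≤ n) (hd : 0 < d) :
    n / d = k / d + (n - k) / d + (if k / d + (n - k) / d < n / d then 1 else 0) := by
  have hnk : k + (n - k) = n := by omega
  have h2 := Nat.add_div (a := k) (b := n - k) hd
  rw [hnk] at h2
  by_cases h : k / d + (n - k) / d < n / d <;> simp only [h, if_true, if_false] <;>
    split at h2 <;> omega

/-- The `q`-binomial coefficient `[n choose k]_q = [n]_q!/([k]_q! [n-k]_q!)` factorizes as the
product of the cyclotomic polynomials `Φ_d(q)` over all positive integers `d ≤ n` with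
`⌊k/d⌋ + ⌊(n-k)/d⌋ < ⌊n/d⌋`. -/
theorem qbinom_eq_prod_cyclotomic (n k : ℕ) (hk : k ≤ n) (B : Polynomial ℤ)
    (hB : B * (qFact k * qFact (n - k)) = qFact n) :
    B = ∏ d ∈ (Finset.Icc 1 n).filter (fun d => k / d + (n - k) / d < n / d),
      cyclotomic d ℤ := by
  set p : ℕ → Prop := fun d => k / d + (n - k) / d < n / d with hp
  have hfilter : (Finset.Icc 1 n).filter p = (Finset.Ioc 1 n).filter p := by
    ext d
    simp only [Finset.mem_filter, Finset.mem_Icc, Finset.mem_Ioc, hp]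
    constructor
    · rintro ⟨⟨h1, h2⟩, h3⟩
      refine ⟨⟨?_, h2⟩, h3⟩
      rcases Nat.lt_or_ge 1 d with h | h
      · exact h
      · exfalso; interval_cases d <;> simp_all <;> omega
    · rintro ⟨⟨h1, h2⟩, h3⟩
      exact ⟨⟨by omega, h2⟩, h3⟩
  rw [hfilter]
  have key : qFact n = (qFact k * qFact (n - k)) *
      ∏ d ∈ (Finset.Ioc 1 n).filter p, cyclotomic d ℤ := by
    rw [qFact_eq_prod n, qFact_eq_prod_ext hk, qFact_eq_prod_ext (Nat.sub_le n k),
      ← Finset.prod_mul_distrib, Finset.prod_filter, ← Finset.prod_mul_distrib]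
    apply Finset.prod_congr rfl
    intro d hd
    simp only [Finset.mem_Ioc] at hd
    rw [div_key hk (by omega)]
    split <;> simp [pow_add, hp] <;> ring
  have hne : qFact k * qFact (n - k) ≠ 0 :=
    mul_ne_zero (qFact_ne_zero k) (qFact_ne_zero (n - k))
  apply mul_right_cancel₀ hne
  rw [hB, key]; ring
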